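/- Cube growth criterion: let d ≥ 2 and L ≥ 1. For a proper subset S ⊊ {1,…,d} define the face F_S(L) := {x ∈ ℤ^d : x_i ∈ [1,L] for i ∈ S, x_i = L+1 for i ∉ S}. Suppose X ⊆ ℤ^d is such that Q^d(L) = {1,…,L}^d is internally spanned by X (i.e., ⟨X ∩ Q^d(L)⟩_{Q^d(L)} = Q^d(L)) and, for every S ⊊ {1,…,d}, the face F_S(L) is |S|-internally spanned by X (under the |S|-dimensional modified bootstrap rule using directions e_i, i ∈ S). Then Q^d(L+1) is internally spanned by X. -/
import Mathlib


/-- Modified bootstrap operator restricted to region `Q`, with active directions `D`. -/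
def bootBetaQD (d : ℕ) (Q : Set (Fin d → ℤ)) (D : Set (Fin d)) (W : Set (Fin d → ℤ)) :
    Set (Fin d → ℤ) :=
  W ∪ {x ∈ Q | ∀ i ∈ D, x + Pi.single i 1 ∈ W ∨ x - Pi.single i 1 ∈ W}

/-- Final configuration of the model on region `Q` with directions `D`. -/
def bootClosureQD (d : ℕ) (Q : Set (Fin d → ℤ)) (D : Set (Fin d)) (W : Set (Fin d → ℤ)) :
    Set (Fin d → ℤ) :=
  ⋃ t : ℕ, (bootBetaQD d Q D)^[t] W

/-- `Q` is internally spanned by `X` with directions `D`. -/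
def InternallySpanned (d : ℕ) (Q : Set (Fin d → ℤ)) (D : Set (Fin d))
    (X : Set (Fin d → ℤ)) : Prop :=
  bootClosureQD d Q D (X ∩ Q) = Q

/-- The cube `Q^d(L) = {1,…,L}^d`. -/
def bootCube (d L : ℕ) : Set (Fin d → ℤ) := {x | ∀ i, 1 ≤ x i ∧ x i ≤ (L : ℤ)}

/-- The face `F_S(L)`: coordinates in `S` range over `[1,L]`, others equal `L+1`. -/
def bootFace (d : ℕ) (S : Finset (Fin d)) (L : ℕ) : Set (Fin d → ℤ) :=
  {x | (∀ i ∈ S, 1 ≤ x i ∧ x i ≤ (L : ℤ)) ∧ ∀ i ∉ S, x i = (L : ℤ) + 1}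

lemma boot_subset_beta (d : ℕ) (Q : Set (Fin d → ℤ)) (D : Set (Fin d))
    (W : Set (Fin d → ℤ)) : W ⊆ bootBetaQD d Q D W :=
  Set.subset_union_left

lemma boot_iter_add (d : ℕ) (Q : Set (Fin d → ℤ)) (D : Set (Fin d))
    (W : Set (Fin d → ℤ)) (a k : ℕ) :
    (bootBetaQD d Q D)^[a] W ⊆ (bootBetaQD d Q D)^[a + k] W := by
  induction k with
  | zero => simp
  | succ k ih =>
    rw [show a + (k + 1) = (a + k) + 1 from rfl, Function.iterate_succ_apply']
    exact ih.trans (boot_subset_beta _ _ _ _)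

lemma boot_iter_le (d : ℕ) (Q : Set (Fin d → ℤ)) (D : Set (Fin d))
    (W : Set (Fin d → ℤ)) {a b : ℕ} (h : a ≤ b) :
    (bootBetaQD d Q D)^[a] W ⊆ (bootBetaQD d Q D)^[b] W := by
  obtain ⟨k, rfl⟩ := Nat.exists_eq_add_of_le h
  exact boot_iter_add d Q D W a k

lemma boot_self_subset_closure (d : ℕ) (Q : Set (Fin d → ℤ)) (D : Set (Fin d))
    (W : Set (Fin d → ℤ)) : W ⊆ bootClosureQD d Q D W := by
  intro x hx
  exact Set.mem_iUnion.mpr ⟨0, hx⟩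

lemma boot_closure_fixed (d : ℕ) (Q : Set (Fin d → ℤ)) (D : Set (Fin d))
    (W : Set (Fin d → ℤ)) :
    bootBetaQD d Q D (bootClosureQD d Q D W) ⊆ bootClosureQD d Q D W := by
  classical
  intro x hx
  rcases hx with h | ⟨hQ, hnb⟩
  · exact h
  · have h2 : ∀ i : Fin d, i ∈ D → ∃ t, x + Pi.single i 1 ∈ (bootBetaQD d Q D)^[t] W ∨
        x - Pi.single i 1 ∈ (bootBetaQD d Q D)^[t] W := by
      intro i hi
      rcases hnb i hi with h | h
      · obtain ⟨t, ht⟩ := Set.mem_iUnion.mp h; exact ⟨t, Or.inl ht⟩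
      · obtain ⟨t, ht⟩ := Set.mem_iUnion.mp h; exact ⟨t, Or.inr ht⟩
    choose f hf using h2
    set T := Finset.univ.sup (fun i : Fin d => if h : i ∈ D then f i h else 0) with hT
    refine Set.mem_iUnion.mpr ⟨T + 1, ?_⟩
    rw [Function.iterate_succ_apply']
    refine Or.inr ⟨hQ, fun i hi => ?_⟩
    have hle : f i hi ≤ T := by
      have := Finset.le_sup (f := fun i : Fin d => if h : i ∈ D then f i h else 0)
        (Finset.mem_univ i)
      simpa [hi] using this
    exact (hf i hi).imp (fun h => boot_iter_le d Q D W hle h)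
      (fun h => boot_iter_le d Q D W hle h)

lemma boot_transfer (d : ℕ) (Q F : Set (Fin d → ℤ)) (D : Set (Fin d))
    (C W : Set (Fin d → ℤ))
    (hC : bootBetaQD d Q Set.univ C ⊆ C) (hFQ : F ⊆ Q) (hW : W ⊆ C)
    (hext : ∀ x ∈ F, ∀ i : Fin d, i ∉ D →
      x + Pi.single i 1 ∈ C ∨ x - Pi.single i 1 ∈ C) :
    bootClosureQD d F D W ⊆ C := by
  refine Set.iUnion_subset fun t => ?_
  induction t with
  | zero => simpa using hW
  | succ t ih =>
    rw [Function.iterate_succ_apply']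
    intro x hx
    rcases hx with h | ⟨hF, hnb⟩
    · exact ih h
    · apply hC
      refine Or.inr ⟨hFQ hF, fun i _ => ?_⟩
      by_cases hi : i ∈ D
      · exact (hnb i hi).imp (fun h => ih h) (fun h => ih h)
      · exact hext x hF i hi

lemma boot_closure_subset (d : ℕ) (Q : Set (Fin d → ℤ)) (D : Set (Fin d))
    (W : Set (Fin d → ℤ)) (hW : W ⊆ Q) : bootClosureQD d Q D W ⊆ Q := by
  refine Set.iUnion_subset fun t => ?_
  induction t with
  | zero => simpa using hW
  | succ t ih =>
    rw [Function.iterate_succ_apply']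
    rintro x (h | h)
    · exact ih h
    · exact h.1

theorem stmt_4 (d L : ℕ) (hd : 2 ≤ d) (hL : 1 ≤ L) (X : Set (Fin d → ℤ))
    (hcube : InternallySpanned d (bootCube d L) Set.univ X)
    (hfaces : ∀ S : Finset (Fin d), S ≠ Finset.univ →
      InternallySpanned d (bootFace d S L) (↑S) X) :
    InternallySpanned d (bootCube d (L + 1)) Set.univ X := by
  classical
  set Q' := bootCube d (L + 1) with hQ'def
  set C := bootClosureQD d Q' Set.univ (X ∩ Q') with hCdef
  have hXC : X ∩ Q' ⊆ C := boot_self_subset_closure _ _ _ _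
  have hCfix := boot_closure_fixed d Q' Set.univ (X ∩ Q')
  have hFaceQ : ∀ S : Finset (Fin d), bootFace d S L ⊆ Q' := by
    intro S x hx i
    by_cases hi : i ∈ S
    · have := hx.1 i hi; push_cast; omega
    · have := hx.2 i hi; push_cast; omega
  have hQLQ : bootCube d L ⊆ Q' := by
    intro x hx i
    have := hx i
    push_cast; omega
  have hQL : bootCube d L ⊆ C := by
    rw [← hcube]
    exact boot_transfer d Q' (bootCube d L) Set.univ C (X ∩ bootCube d L) hCfix hQLQ
      (fun x hx => hXC ⟨hx.1, hQLQ hx.2⟩)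
      (fun x hx i hi => absurd (Set.mem_univ i) hi)
  have key : ∀ n : ℕ, ∀ S : Finset (Fin d), S ≠ Finset.univ →
      (Finset.univ \ S).card ≤ n → bootFace d S L ⊆ C := by
    intro n
    induction n with
    | zero =>
      intro S hS h0
      exfalso
      apply hS
      have hempty : Finset.univ \ S = ∅ := Finset.card_eq_zero.mp (Nat.le_zero.mp h0)
      apply Finset.eq_univ_iff_forall.mpr
      intro i
      by_contra hi
      have : i ∈ Finset.univ \ S := Finset.mem_sdiff.mpr ⟨Finset.mem_univ i, hi⟩
      rw [hempty] at this
      exact absurd this (Finset.notMem_empty i)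
    | succ n ih =>
      intro S hS hcard
      rw [← hfaces S hS]
      apply boot_transfer d Q' (bootFace d S L) (↑S) C (X ∩ bootFace d S L) hCfix
        (hFaceQ S) (fun x hx => hXC ⟨hx.1, hFaceQ S hx.2⟩)
      intro x hx i hi
      right
      have hi' : i ∉ S := by simpa using hi
      have hxi : x i = (L : ℤ) + 1 := hx.2 i hi'
      by_cases hSu : insert i S = Finset.univ
      · apply hQL
        intro j
        simp only [Pi.sub_apply, Pi.single_apply]
        by_cases hj : j = i
        · subst hj; simp [hxi]; omega
        · have hjS : j ∈ S := by
            have : j ∈ insert i S := hSu ▸ Finset.mem_univ j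
            rcases Finset.mem_insert.mp this with h | h
            · exact absurd h hj
            · exact h
          have := hx.1 j hjS
          simp [hj]; omega
      · have hcard' : (Finset.univ \ insert i S).card ≤ n := by
          have h1 : Finset.univ \ insert i S = (Finset.univ \ S).erase i :=
            Finset.sdiff_insert _ _ _
          have hiin : i ∈ Finset.univ \ S := Finset.mem_sdiff.mpr ⟨Finset.mem_univ i, hi'⟩
          rw [h1, Finset.card_erase_of_mem hiin]
          omega
        apply ih (insert i S) hSu hcard'
        constructor
        · intro j hj
          simp only [Pi.sub_apply, Pi.single_apply]
          rcases Finset.mem_insert.mp hj with h | h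
          · subst h; simp [hxi]; omega
          · have hji : j ≠ i := fun hji => hi' (hji ▸ h)
            have := hx.1 j h
            simp [hji]; omega
        · intro j hj
          have hji : j ≠ i := fun hji => hj (hji ▸ Finset.mem_insert_self i S)
          have hjS : j ∉ S := fun h => hj (Finset.mem_insert_of_mem h)
          have := hx.2 j hjS
          simp only [Pi.sub_apply, Pi.single_apply]
          simp [hji]; omega
  apply Set.Subset.antisymm
  · exact boot_closure_subset _ _ _ _ Set.inter_subset_right
  · intro x hx
    set S := Finset.univ.filter (fun i => x i ≤ (L : ℤ)) with hSdef
    have hxQ : ∀ i, 1 ≤ x i ∧ x i ≤ (L : ℤ) + 1 := by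
      intro i
      have := hx i
      push_cast at this
      exact this
    by_cases h : S = Finset.univ
    · apply hQL
      intro i
      have h2 : x i ≤ (L : ℤ) := by
        have : i ∈ S := h ▸ Finset.mem_univ i
        exact (Finset.mem_filter.mp this).2
      exact ⟨(hxQ i).1, h2⟩
    · apply key (Finset.univ \ S).card S h le_rfl
      constructor
      · intro j hj
        rw [hSdef, Finset.mem_filter] at hj
        exact ⟨(hxQ j).1, hj.2⟩
      · intro j hj
        rw [hSdef, Finset.mem_filter] at hj
        push_neg at hj
        have h2 := hj (Finset.mem_univ j)
        have := hxQ j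
        omega
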